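/- For every n, the set A of odd integers in [1,2n] together with powers of 2 in [1,2n] satisfies |A| > n + log₂(n), and hence h₅(n) > log₂(n), where h₅(n) is the smallest integer h such that every A ⊆ {1,...,2n} with |A| ≥ n + h contains all ten pairwise sums of five distinct positive integers. -/
import Mathlib

lemma pigeon5 : ∀ f : Fin 5 → Bool,
    ∃ i j k : Fin 5, i < j ∧ j < k ∧ f i = f j ∧ f j = f k := by decide

lemma no_three_sorted (x y z a b c : ℕ) (hx : 0 < x) (hxy : x < y) (hyz : y < z)
    (h1 : x + y = 2 ^ a) (h2 : x + z = 2 ^ b) (h3 : y + z = 2 ^ c) : False := by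
  have hab : a < b := by
    have h : (2:ℕ) ^ a < 2 ^ b := by omega
    exact (Nat.pow_lt_pow_iff_right (by norm_num)).1 h
  have hbc : b < c := by
    have h : (2:ℕ) ^ b < 2 ^ c := by omega
    exact (Nat.pow_lt_pow_iff_right (by norm_num)).1 h
  have h4 : (2:ℕ) ^ a < 2 ^ b := Nat.pow_lt_pow_right (by norm_num) hab
  have h5 : (2:ℕ) ^ (b+1) ≤ 2 ^ c := Nat.pow_le_pow_right (by norm_num) hbc
  have h6 : (2:ℕ) ^ (b+1) = 2 * 2 ^ b := by ring
  omega

lemma no_three (x y z : ℕ) (hx : 0 < x) (hy : 0 < y) (hz : 0 < z)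
    (hxy : x ≠ y) (hxz : x ≠ z) (hyz : y ≠ z)
    (h1 : ∃ a, x + y = 2 ^ a) (h2 : ∃ b, x + z = 2 ^ b) (h3 : ∃ c, y + z = 2 ^ c) :
    False := by
  obtain ⟨a, ha⟩ := h1; obtain ⟨b, hb⟩ := h2; obtain ⟨c, hc⟩ := h3
  rcases lt_trichotomy x y with h1|h1|h1
  · rcases lt_trichotomy y z with h2|h2|h2
    · exact no_three_sorted x y z a b c hx h1 h2 ha hb hc
    · exact absurd h2 hyz
    · rcases lt_trichotomy x z with h3|h3|h3
      · exact no_three_sorted x z y b a c hx h3 h2 hb ha (by omega)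
      · exact absurd h3 hxz
      · exact no_three_sorted z x y b c a hz h3 h1 (by omega) (by omega) ha
  · exact absurd h1 hxy
  · rcases lt_trichotomy x z with h2|h2|h2
    · exact no_three_sorted y x z a c b hy h1 h2 (by omega) hc hb
    · exact absurd h2 hxz
    · rcases lt_trichotomy y z with h3|h3|h3
      · exact no_three_sorted y z x c a b hy h3 h2 hc (by omega) (by omega)
      · exact absurd h3 hyz
      · exact no_three_sorted z y x c b a hz h3 h1 (by omega) (by omega) (by omega)

lemma card_bound (n : ℕ) (hn : 1 ≤ n)
    (inst : DecidablePred fun x : ℕ => Odd x ∨ ∃ m ∈ Finset.range (2 * n + 1), x = 2 ^ m) :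
    n + Nat.log 2 n + 1 ≤
      (@Finset.filter ℕ (fun x => Odd x ∨ ∃ m ∈ Finset.range (2 * n + 1), x = 2 ^ m) inst
        (Finset.Icc 1 (2 * n))).card := by
  have hLn : Nat.log 2 n ≤ n := Nat.log_le_self 2 n
  have hpow : 2 ^ Nat.log 2 n ≤ n := Nat.pow_log_le_self 2 (by omega)
  set L := Nat.log 2 n with hL
  set S := @Finset.filter ℕ (fun x => Odd x ∨ ∃ m ∈ Finset.range (2 * n + 1), x = 2 ^ m) inst
      (Finset.Icc 1 (2 * n)) with hS
  set T1 := (Finset.range n).image (fun i => 2 * i + 1) with hT1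
  set T2 := (Finset.Icc 1 (L + 1)).image (fun j => 2 ^ j) with hT2
  have hsub : T1 ∪ T2 ⊆ S := by
    intro x hx
    rcases Finset.mem_union.1 hx with hx | hx
    · obtain ⟨i, hi, rfl⟩ := Finset.mem_image.1 hx
      rw [Finset.mem_range] at hi
      rw [hS]
      simp only [Finset.mem_filter]
      exact ⟨Finset.mem_Icc.2 (by omega), Or.inl ⟨i, by ring⟩⟩
    · obtain ⟨j, hj, rfl⟩ := Finset.mem_image.1 hx
      rw [Finset.mem_Icc] at hj
      have hle : (2:ℕ) ^ j ≤ 2 ^ (L + 1) := Nat.pow_le_pow_right (by norm_num) hj.2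
      have h2L : (2:ℕ) ^ (L + 1) = 2 * 2 ^ L := by ring
      rw [hS]
      simp only [Finset.mem_filter]
      exact ⟨Finset.mem_Icc.2 ⟨Nat.one_le_two_pow, by omega⟩,
        Or.inr ⟨j, Finset.mem_range.2 (by omega), rfl⟩⟩
  have hd : Disjoint T1 T2 := by
    rw [Finset.disjoint_left]
    intro x hx1 hx2
    obtain ⟨i, hi, rfl⟩ := Finset.mem_image.1 hx1
    obtain ⟨j, hj, hjeq⟩ := Finset.mem_image.1 hx2
    rw [Finset.mem_Icc] at hj
    obtain ⟨j', rfl⟩ : ∃ j', j = j' + 1 := ⟨j - 1, by omega⟩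
    have : (2:ℕ) ^ (j' + 1) = 2 * 2 ^ j' := by ring
    omega
  have hc1 : T1.card = n := by
    rw [hT1, Finset.card_image_of_injective _ (fun a b hab => by omega),
      Finset.card_range]
  have hc2 : T2.card = L + 1 := by
    rw [hT2, Finset.card_image_of_injective _ (Nat.pow_right_injective (by norm_num)),
      Nat.card_Icc]
    omega
  calc n + L + 1 = (T1 ∪ T2).card := by
        rw [Finset.card_union_of_disjoint hd, hc1, hc2]; omega
    _ ≤ S.card := Finset.card_le_card hsub

lemma logb_bound (n : ℕ) (hn : 1 ≤ n) :
    Real.logb 2 n < (Nat.log 2 n : ℝ) + 1 := by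
  have h1 : (n : ℝ) < 2 ^ (Nat.log 2 n + 1) := by
    exact_mod_cast Nat.lt_pow_succ_log_self (by norm_num) n
  have h2 : Real.logb 2 n < Real.logb 2 (2 ^ (Nat.log 2 n + 1)) :=
    Real.logb_lt_logb (by norm_num) (by exact_mod_cast hn) h1
  rw [Real.logb_pow, Real.logb_self_eq_one (by norm_num : (1:ℝ) < 2), mul_one] at h2
  push_cast at h2
  linarith

lemma final_aux (n : ℕ) (hn : 1 ≤ n) (c : ℕ) (hc : n + Nat.log 2 n + 1 ≤ c) :
    (c : ℝ) > (n : ℝ) + Real.logb 2 n := by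
  have h1 := logb_bound n hn
  have h2 : ((n + Nat.log 2 n + 1 : ℕ) : ℝ) ≤ (c : ℝ) := by exact_mod_cast hc
  push_cast at h2
  linarith

open scoped Classical in
theorem stmt_8 (n : ℕ) (hn : 1 ≤ n) :
    ((((Finset.Icc 1 (2 * n)).filter
        (fun x => Odd x ∨ ∃ m ∈ Finset.range (2 * n + 1), x = 2 ^ m)).card : ℝ) >
      (n : ℝ) + Real.logb 2 n) ∧
    (∀ h : ℕ,
      (∀ A : Finset ℕ, A ⊆ Finset.Icc 1 (2 * n) → n + h ≤ A.card →
        ∃ b : Fin 5 → ℕ, Function.Injective b ∧ (∀ i, 0 < b i) ∧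
          ∀ i j : Fin 5, i < j → b i + b j ∈ A) →
      (h : ℝ) > Real.logb 2 n) := by
  constructor
  · exact final_aux n hn _ (card_bound n hn _)
  · intro h H
    by_contra hle
    push_neg at hle
    have hhL : h ≤ Nat.log 2 n := by
      have h1 : (h : ℝ) < (Nat.log 2 n : ℝ) + 1 := lt_of_le_of_lt hle (logb_bound n hn)
      exact_mod_cast Nat.lt_succ_iff.1 (by exact_mod_cast h1)
    obtain ⟨b, hinj, hpos, hsum⟩ :=
      H ((Finset.Icc 1 (2 * n)).filter
          (fun x => Odd x ∨ ∃ m ∈ Finset.range (2 * n + 1), x = 2 ^ m))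
        (Finset.filter_subset _ _)
        (le_trans (by omega) (card_bound n hn _))
    obtain ⟨i, j, k, hij, hjk, hfij, hfjk⟩ :=
      pigeon5 (fun i => decide (b i % 2 = 0))
    have hmij : b i % 2 = 0 ↔ b j % 2 = 0 := by
      simpa [decide_eq_decide] using hfij
    have hmjk : b j % 2 = 0 ↔ b k % 2 = 0 := by
      simpa [decide_eq_decide] using hfjk
    have hpowsum : ∀ p q : Fin 5, p < q → (b p + b q) % 2 = 0 →
        ∃ m, b p + b q = 2 ^ m := by
      intro p q hpq heven
      have hmem := hsum p q hpq
      simp only [Finset.mem_filter] at hmem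
      rcases hmem.2 with hodd | ⟨m, _, hm⟩
      · rw [Nat.odd_iff] at hodd; omega
      · exact ⟨m, hm⟩
    exact no_three (b i) (b j) (b k) (hpos i) (hpos j) (hpos k)
      (fun e => absurd (hinj e) (ne_of_lt hij))
      (fun e => absurd (hinj e) (ne_of_lt (hij.trans hjk)))
      (fun e => absurd (hinj e) (ne_of_lt hjk))
      (hpowsum i j hij (by omega))
      (hpowsum i k (hij.trans hjk) (by omega))
      (hpowsum j k hjk (by omega))
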